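/- If T is an equimeasurable map on symmetrizable functions, then for every measurable set A of finite measure and every α > 0, the set A_α = {x : T(α·1_A)(x) = α} is measurable with the same Lebesgue measure as A, and T(α·1_A)(x) ∈ (-∞, 0] ∪ {α} for almost every x. -/

import Mathlib

open MeasureTheory Set

/-- The essential infimum of a real-valued function, computed in `EReal`. -/
noncomputable def essInfE {n : ℕ} (f : EuclideanSpace ℝ (Fin n) → ℝ) : EReal :=
  essInf (fun x => (f x : EReal)) volume

/-- A function `f : ℝⁿ → ℝ` is symmetrizable if it is measurable and every
super-level set `{x | f x > t}` with `t > essinf f` has finite Lebesgue measure. -/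
def Symmetrizable {n : ℕ} (f : EuclideanSpace ℝ (Fin n) → ℝ) : Prop :=
  Measurable f ∧ ∀ t : ℝ, essInfE f < (t : EReal) → volume {x | t < f x} < ⊤

theorem stmt_3 {n : ℕ}
    (T : (EuclideanSpace ℝ (Fin n) → ℝ) → (EuclideanSpace ℝ (Fin n) → ℝ))
    (hmap : ∀ f, Symmetrizable f → Symmetrizable (T f))
    (hequi : ∀ f, Symmetrizable f → ∀ t : ℝ,
      volume {x | t < T f x} = volume {x | t < f x})
    (A : Set (EuclideanSpace ℝ (Fin n))) (hA : MeasurableSet A) (hAfin : volume A < ⊤)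
    (α : ℝ) (hα : 0 < α) :
    MeasurableSet {x | T (A.indicator fun _ => α) x = α} ∧
    volume {x | T (A.indicator fun _ => α) x = α} = volume A ∧
    ∀ᵐ x ∂volume, T (A.indicator fun _ => α) x ≤ 0 ∨ T (A.indicator fun _ => α) x = α := by
  set f : EuclideanSpace ℝ (Fin n) → ℝ := A.indicator fun _ => α with hf
  have hfmeas : Measurable f := measurable_const.indicator hA
  have hfval : ∀ x, f x = 0 ∨ f x = α := by
    intro x; by_cases hx : x ∈ A
    · right; simp [hf, indicator_of_mem hx]
    · left; simp [hf, indicator_of_notMem hx]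
  have hfnonneg : ∀ x, 0 ≤ f x := fun x =>
    (hfval x).elim (fun h => h ▸ le_rfl) (fun h => h ▸ hα.le)
  have hlevel : ∀ t : ℝ, 0 ≤ t → t < α → {x | t < f x} = A := by
    intro t ht htα
    ext x
    simp only [mem_setOf_eq]
    constructor
    · intro h; by_contra hx
      rw [hf, indicator_of_notMem hx] at h; linarith
    · intro hx; rw [hf, indicator_of_mem hx]; exact htα
  have hlevelα : {x | α < f x} = ∅ := by
    ext x; simp only [mem_setOf_eq, mem_empty_iff_false, iff_false, not_lt]
    rcases hfval x with h | h <;> rw [h] <;> linarith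
  have hsym : Symmetrizable f := by
    refine ⟨hfmeas, fun t ht => ?_⟩
    have h0 : (0 : EReal) ≤ essInfE f :=
      le_essInf_of_ae_le _ (Filter.Eventually.of_forall fun x =>
        show (0 : EReal) ≤ (f x : EReal) by exact_mod_cast hfnonneg x)
    have ht0 : (0 : ℝ) < t := by exact_mod_cast lt_of_le_of_lt h0 ht
    have hsub : {x | t < f x} ⊆ A := by
      intro x hx
      by_contra hxA
      have : f x = 0 := by rw [hf, indicator_of_notMem hxA]
      rw [mem_setOf_eq, this] at hx; linarith
    exact lt_of_le_of_lt (measure_mono hsub) hAfin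
  set g : EuclideanSpace ℝ (Fin n) → ℝ := T f with hgdef
  have hgmeas : Measurable g := (hmap f hsym).1
  have heq : ∀ t : ℝ, volume {x | t < g x} = volume {x | t < f x} := hequi f hsym
  have μgt : ∀ t : ℝ, 0 ≤ t → t < α → volume {x | t < g x} = volume A := by
    intro t ht htα; rw [heq, hlevel t ht htα]
  have μgα : volume {x | α < g x} = 0 := by
    rw [heq, hlevelα]; simp
  -- the intermediate range has measure zero
  have hnull : volume {x | 0 < g x ∧ g x < α} = 0 := by
    have hsub : {x | 0 < g x ∧ g x < α} ⊆
        ⋃ k : ℕ, ({x | 0 < g x} \ {x | α * (k / (k + 1)) < g x}) := by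
      intro x hx
      obtain ⟨hx0, hxα⟩ := hx
      have h1r : 0 < 1 - g x / α := by
        have : g x / α < 1 := (div_lt_one hα).mpr hxα
        linarith
      obtain ⟨k, hk⟩ := exists_nat_gt (1 / (1 - g x / α))
      refine mem_iUnion.mpr ⟨k, hx0, ?_⟩
      simp only [mem_setOf_eq, not_lt]
      have hk1 : (0 : ℝ) < (k : ℝ) + 1 := by positivity
      have h2 : 1 / ((k : ℝ) + 1) < 1 - g x / α := by
        rw [div_lt_iff₀ h1r] at hk
        rw [div_lt_iff₀ hk1]
        nlinarith
      have h4 : g x / α ≤ (k : ℝ) / (k + 1) := by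
        have : (k : ℝ) / (k + 1) = 1 - 1 / (k + 1) := by field_simp; ring
        rw [this]; linarith
      calc g x = α * (g x / α) := by field_simp
        _ ≤ α * ((k : ℝ) / (k + 1)) := by
            exact mul_le_mul_of_nonneg_left h4 hα.le
    refine measure_mono_null hsub (measure_iUnion_null fun k => ?_)
    have hk1 : (0 : ℝ) < (k : ℝ) + 1 := by positivity
    have ht0 : 0 ≤ α * ((k : ℝ) / (k + 1)) := by positivity
    have htα : α * ((k : ℝ) / (k + 1)) < α := by
      have : (k : ℝ) / (k + 1) < 1 := (div_lt_one hk1).mpr (by linarith)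
      nlinarith
    have hss : {x | α * ((k : ℝ) / (k + 1)) < g x} ⊆ {x | 0 < g x} := by
      intro x hx; exact lt_of_le_of_lt ht0 hx
    rw [measure_diff hss (hgmeas measurableSet_Ioi).nullMeasurableSet
      (by rw [μgt _ ht0 htα]; exact hAfin.ne),
      μgt _ le_rfl hα, μgt _ ht0 htα, tsub_self]
  have hmeasα : MeasurableSet {x | g x = α} := hgmeas (measurableSet_singleton α)
  have htri : {x | 0 < g x} ⊆
      {x | 0 < g x ∧ g x < α} ∪ ({x | g x = α} ∪ {x | α < g x}) := by
    intro x hx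
    rcases lt_trichotomy (g x) α with h | h | h
    · exact Or.inl ⟨hx, h⟩
    · exact Or.inr (Or.inl h)
    · exact Or.inr (Or.inr h)
  have hle : volume {x | 0 < g x} ≤ volume {x | g x = α} := by
    calc volume {x | 0 < g x}
        ≤ volume ({x | 0 < g x ∧ g x < α} ∪ ({x | g x = α} ∪ {x | α < g x})) :=
          measure_mono htri
      _ ≤ volume {x | 0 < g x ∧ g x < α} + volume ({x | g x = α} ∪ {x | α < g x}) :=
          measure_union_le _ _
      _ ≤ volume {x | 0 < g x ∧ g x < α} +
            (volume {x | g x = α} + volume {x | α < g x}) := by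
          gcongr; exact measure_union_le _ _
      _ = volume {x | g x = α} := by rw [hnull, μgα]; simp
  have hge : volume {x | g x = α} ≤ volume {x | 0 < g x} := by
    apply measure_mono
    intro x hx
    rw [mem_setOf_eq] at hx ⊢
    rw [hx]; exact hα
  have hvol : volume {x | g x = α} = volume A := by
    rw [le_antisymm hge hle, μgt 0 le_rfl hα]
  refine ⟨hmeasα, hvol, ?_⟩
  rw [ae_iff]
  refine measure_mono_null (fun x hx => ?_)
    (measure_union_null hnull μgα)
  simp only [mem_setOf_eq, not_or, not_le] at hx
  obtain ⟨hx0, hxα⟩ := hx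
  rcases lt_trichotomy (g x) α with h | h | h
  · exact Or.inl ⟨hx0, h⟩
  · exact absurd h hxα
  · exact Or.inr h
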